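/- For every n, m ∈ ℤ³, every i ∈ {1,2,3} and every ε ∈ {1,-1}, the identity (((s^i_n + ε c^i_m) · ∇)(s^i_n + ε c^i_m))(x) = (n_i/2) s^i_{2n}(x) - (m_i/2) s^i_{2m}(x) + ε ((n_i + m_i)/2) c^i_{n+m}(x) + ε ((n_i - m_i)/2) c^i_{n-m}(x) holds for all x ∈ ℝ³. -/

import Mathlib

/-- The vector field `c^i_m(x) = e_i cos⟨m, x⟩` on `ℝ³`. -/
noncomputable def vcos (m : Fin 3 → ℤ) (i : Fin 3) : (Fin 3 → ℝ) → (Fin 3 → ℝ) :=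
  fun x => Pi.single i (Real.cos (∑ j, (m j : ℝ) * x j))

/-- The vector field `s^i_m(x) = e_i sin⟨m, x⟩` on `ℝ³`. -/
noncomputable def vsin (m : Fin 3 → ℤ) (i : Fin 3) : (Fin 3 → ℝ) → (Fin 3 → ℝ) :=
  fun x => Pi.single i (Real.sin (∑ j, (m j : ℝ) * x j))

/-- The convective derivative `(u·∇)v`, with `((u·∇)v)_k = ∑_j u_j ∂_j v_k`. -/
noncomputable def conv (u v : (Fin 3 → ℝ) → (Fin 3 → ℝ)) : (Fin 3 → ℝ) → (Fin 3 → ℝ) :=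
  fun x k => ∑ j, u x j * fderiv ℝ (fun y => v y k) x (Pi.single j 1)


noncomputable def lmap (a : Fin 3 → ℤ) : (Fin 3 → ℝ) →L[ℝ] ℝ :=
  ∑ j, (a j : ℝ) • ContinuousLinearMap.proj (R := ℝ) (φ := fun _ : Fin 3 => ℝ) j

lemma lmap_apply (a : Fin 3 → ℤ) (y : Fin 3 → ℝ) : lmap a y = ∑ j, (a j : ℝ) * y j := by
  simp [lmap, ContinuousLinearMap.sum_apply, ContinuousLinearMap.proj_apply, smul_eq_mul]

lemma lmap_single (a : Fin 3 → ℤ) (j : Fin 3) : lmap a (Pi.single j 1) = (a j : ℝ) := by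
  rw [lmap_apply]
  simp [Pi.single_apply, Finset.sum_ite_eq']

lemma lin_hasFDerivAt (a : Fin 3 → ℤ) (x : Fin 3 → ℝ) :
    HasFDerivAt (fun y : Fin 3 → ℝ => ∑ j, (a j : ℝ) * y j) (lmap a) x := by
  have : (fun y : Fin 3 → ℝ => ∑ j, (a j : ℝ) * y j) = fun y => lmap a y := by
    funext y; rw [lmap_apply]
  rw [this]
  exact (lmap a).hasFDerivAt

lemma sin_hasFDerivAt (a : Fin 3 → ℤ) (x : Fin 3 → ℝ) :
    HasFDerivAt (fun y : Fin 3 → ℝ => Real.sin (∑ j, (a j : ℝ) * y j))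
      (Real.cos (∑ j, (a j : ℝ) * x j) • lmap a) x :=
  (Real.hasDerivAt_sin _).comp_hasFDerivAt x (lin_hasFDerivAt a x)

lemma cos_hasFDerivAt (a : Fin 3 → ℤ) (x : Fin 3 → ℝ) :
    HasFDerivAt (fun y : Fin 3 → ℝ => Real.cos (∑ j, (a j : ℝ) * y j))
      ((-Real.sin (∑ j, (a j : ℝ) * x j)) • lmap a) x :=
  (Real.hasDerivAt_cos _).comp_hasFDerivAt x (lin_hasFDerivAt a x)

theorem stmt6 (n m : Fin 3 → ℤ) (i : Fin 3) (ε : ℝ) (hε : ε = 1 ∨ ε = -1) (x : Fin 3 → ℝ) :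
    conv (vsin n i + ε • vcos m i) (vsin n i + ε • vcos m i) x
      = ((n i : ℝ) / 2) • vsin (2 • n) i x - ((m i : ℝ) / 2) • vsin (2 • m) i x
        + (ε * (((n i : ℝ) + (m i : ℝ)) / 2)) • vcos (n + m) i x
        + (ε * (((n i : ℝ) - (m i : ℝ)) / 2)) • vcos (n - m) i x := by
  set Sn := ∑ j, (n j : ℝ) * x j with hSn
  set Sm := ∑ j, (m j : ℝ) * x j with hSm
  have hε2 : ε * ε = 1 := by rcases hε with h | h <;> rw [h] <;> ring
  funext k
  by_cases hk : k = i
  · subst hk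
    have hfun : (fun y => (vsin n k + ε • vcos m k) y k)
        = fun y => Real.sin (∑ j, (n j : ℝ) * y j) + ε * Real.cos (∑ j, (m j : ℝ) * y j) := by
      funext y; simp [vsin, vcos]
    have hD : HasFDerivAt (fun y => (vsin n k + ε • vcos m k) y k)
        (Real.cos Sn • lmap n + ε • ((-Real.sin Sm) • lmap m)) x := by
      rw [hfun]
      exact (sin_hasFDerivAt n x).add ((cos_hasFDerivAt m x).const_mul ε)
    have huval : ∀ j, (vsin n k + ε • vcos m k) x j
        = (Pi.single k (Real.sin Sn + ε * Real.cos Sm) : Fin 3 → ℝ) j := by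
      intro j
      by_cases hj : j = k
      · subst hj; simp [vsin, vcos, hSn, hSm]
      · simp [vsin, vcos, Pi.single_eq_of_ne hj]
    simp only [conv, hD.fderiv, huval]
    rw [Finset.sum_eq_single k]
    · simp only [Pi.single_eq_same, ContinuousLinearMap.add_apply,
        ContinuousLinearMap.smul_apply, lmap_single, smul_eq_mul]
      have h2n : (∑ j, ((2 • n) j : ℝ) * x j) = 2 * Sn := by
        rw [hSn, Finset.mul_sum]
        refine Finset.sum_congr rfl fun j _ => ?_
        have : ((2 • n) j : ℤ) = 2 * n j := by simp [Pi.smul_apply, two_smul, two_mul]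
        rw [this]; push_cast; ring
      have h2m : (∑ j, ((2 • m) j : ℝ) * x j) = 2 * Sm := by
        rw [hSm, Finset.mul_sum]
        refine Finset.sum_congr rfl fun j _ => ?_
        have : ((2 • m) j : ℤ) = 2 * m j := by simp [Pi.smul_apply, two_smul, two_mul]
        rw [this]; push_cast; ring
      have hnm : (∑ j, ((n + m) j : ℝ) * x j) = Sn + Sm := by
        rw [hSn, hSm, ← Finset.sum_add_distrib]
        refine Finset.sum_congr rfl fun j _ => ?_
        push_cast [Pi.add_apply]; ring
      have hnm' : (∑ j, ((n - m) j : ℝ) * x j) = Sn - Sm := by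
        rw [hSn, hSm, ← Finset.sum_sub_distrib]
        refine Finset.sum_congr rfl fun j _ => ?_
        push_cast [Pi.sub_apply]; ring
      simp only [Pi.smul_apply, Pi.add_apply, Pi.sub_apply] at h2n h2m hnm hnm'
      simp only [vsin, vcos, Pi.smul_apply, Pi.sub_apply,
        Pi.add_apply, Pi.single_eq_same, smul_eq_mul]
      rw [h2n, h2m, hnm, hnm',
        Real.sin_two_mul, Real.sin_two_mul, Real.cos_add, Real.cos_sub]
      linear_combination (-(m k : ℝ) * Real.cos Sm * Real.sin Sm) * hε2
    · intro j _ hj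
      rw [Pi.single_eq_of_ne hj]; ring
    · intro h; exact absurd (Finset.mem_univ k) h
  · have hfun : (fun y => (vsin n i + ε • vcos m i) y k) = fun _ => (0 : ℝ) := by
      funext y; simp [vsin, vcos, Pi.single_eq_of_ne hk]
    simp only [conv, hfun, fderiv_const]
    simp [vsin, vcos, Pi.single_eq_of_ne hk]
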